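/- Dual/ratio formulation lower bound: for any operators A, B ≥ 0 such that Tr(Aσ) ≤ Tr(Bσ) for all σ ∈ F, and any state ρ with Tr(Bρ) > 0, the projective robustness satisfies Ω(ρ) ≥ Tr(Aρ)/Tr(Bρ). -/

import Mathlib

open scoped ENNReal NNReal ComplexOrder
open Matrix

variable {ι κ : Type*}

/-- Max-relative entropy (non-logarithmic): `inf { λ ≥ 0 : ρ ≤ λσ }`, with `inf ∅ = ∞`.
Here `A ≤ B` means `B - A` is positive semidefinite. -/
noncomputable def Rmax [Fintype ι] (ρ σ : Matrix ι ι ℂ) : ℝ≥0∞ :=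
  sInf {x : ℝ≥0∞ | ∃ l : ℝ≥0, x = (l : ℝ≥0∞) ∧ ((l : ℝ) • σ - ρ).PosSemidef}

/-- A state: positive semidefinite with unit trace. -/
def IsState [Fintype ι] (ρ : Matrix ι ι ℂ) : Prop :=
  ρ.PosSemidef ∧ ρ.trace = 1

/-- A pure state: a rank-one (idempotent) state. -/
def IsPure [Fintype ι] (φ : Matrix ι ι ℂ) : Prop :=
  φ.PosSemidef ∧ φ * φ = φ ∧ φ.trace = 1

/-- The cone generated by a set of states. -/
noncomputable def cone (F : Set (Matrix ι ι ℂ)) : Set (Matrix ι ι ℂ) :=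
  {x | ∃ (l : ℝ≥0) (σ : Matrix ι ι ℂ), σ ∈ F ∧ x = (l : ℝ) • σ}

/-- Projective robustness `Ω(ρ) = inf_{σ ∈ F} Rmax(ρ‖σ) Rmax(σ‖ρ)`. -/
noncomputable def Omega [Fintype ι] (F : Set (Matrix ι ι ℂ)) (ρ : Matrix ι ι ℂ) : ℝ≥0∞ :=
  ⨅ σ ∈ F, Rmax ρ σ * Rmax σ ρ

/-- Support of an operator, as the range of the associated linear map. -/
noncomputable def msupport [Fintype ι] (ρ : Matrix ι ι ℂ) : Submodule ℂ (ι → ℂ) :=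
  LinearMap.range ρ.mulVecLin

/-- A positive linear map on matrices. -/
def IsPosMap [Fintype ι] [Fintype κ] (E : Matrix ι ι ℂ →ₗ[ℂ] Matrix κ κ ℂ) : Prop :=
  ∀ ρ, ρ.PosSemidef → (E ρ).PosSemidef

/-- Maximal fidelity with the free set: `F_F(φ) = max_{σ ∈ F} ⟨φ|σ|φ⟩ = max_{σ ∈ F} Tr(φσ)`. -/
noncomputable def Ffree [Fintype ι] (F : Set (Matrix ι ι ℂ)) (φ : Matrix ι ι ℂ) : ℝ :=
  sSup {x : ℝ | ∃ σ ∈ F, x = ((φ * σ).trace).re}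
/-- Trace of a PSD complex matrix is nonnegative (in ComplexOrder). -/
lemma psd_trace_nonneg [Fintype ι] [DecidableEq ι] {M : Matrix ι ι ℂ}
    (hM : M.PosSemidef) : 0 ≤ M.trace := by
  rw [Matrix.trace]
  apply Finset.sum_nonneg
  intro i _
  exact hM.diag_nonneg

open scoped MatrixOrder in
lemma psd_mul_trace_re_nonneg [Fintype ι] [DecidableEq ι] {P Q : Matrix ι ι ℂ}
    (hP : P.PosSemidef) (hQ : Q.PosSemidef) : 0 ≤ ((P * Q).trace).re := by
  have hP0 : (0 : Matrix ι ι ℂ) ≤ P := Matrix.nonneg_iff_posSemidef.mpr hP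
  have hS : (CFC.sqrt P).PosSemidef := Matrix.nonneg_iff_posSemidef.mp (CFC.sqrt_nonneg P)
  have hsq : CFC.sqrt P * CFC.sqrt P = P := CFC.sqrt_mul_sqrt_self P hP0
  have hfac : P = CFC.sqrt P * CFC.sqrt P := hsq.symm
  have h1 : (P * Q).trace = (CFC.sqrt P * Q * CFC.sqrt P).trace := by
    have : (CFC.sqrt P * CFC.sqrt P * Q).trace = (CFC.sqrt P * Q * CFC.sqrt P).trace := by
      rw [Matrix.trace_mul_cycle (CFC.sqrt P) (CFC.sqrt P) Q,
        Matrix.trace_mul_cycle Q (CFC.sqrt P) (CFC.sqrt P)]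
    rwa [hsq] at this
  have h2 : (CFC.sqrt P * Q * CFC.sqrt P).PosSemidef := by
    have := hQ.conjTranspose_mul_mul_same (CFC.sqrt P)
    rwa [hS.1.eq] at this
  have := psd_trace_nonneg h2
  rw [h1]
  exact (Complex.le_def.mp this).1

/-- dual/ratio lower bound: if `A, B ≥ 0` satisfy `Tr(Aσ) ≤ Tr(Bσ)` for all
`σ ∈ F`, then `Ω(ρ) ≥ Tr(Aρ)/Tr(Bρ)` whenever `Tr(Bρ) > 0`. -/
theorem omega_dual_ratio_lower_bound [Fintype ι] [DecidableEq ι]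
    (F : Set (Matrix ι ι ℂ)) (hFne : F.Nonempty) (hFcpt : IsCompact F)
    (hFconv : Convex ℝ F) (hFstate : ∀ σ ∈ F, IsState σ)
    (A B : Matrix ι ι ℂ) (hA : A.PosSemidef) (hB : B.PosSemidef)
    (hAB : ∀ σ ∈ F, ((A * σ).trace).re ≤ ((B * σ).trace).re)
    (ρ : Matrix ι ι ℂ) (hρ : IsState ρ) (hBρ : 0 < ((B * ρ).trace).re) :
    ENNReal.ofReal (((A * ρ).trace).re / ((B * ρ).trace).re) ≤ Omega F ρ := by
  obtain ⟨hρpsd, hρtr⟩ := hρ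
  rw [Omega]
  refine le_iInf₂ fun σ hσ => ?_
  obtain ⟨hσpsd, hσtr⟩ := hFstate σ hσ
  set c := ENNReal.ofReal (((A * ρ).trace).re / ((B * ρ).trace).re) with hc
  have key : ∀ (l m : ℝ≥0), ((l:ℝ) • σ - ρ).PosSemidef → ((m:ℝ) • ρ - σ).PosSemidef →
      c ≤ (l : ℝ≥0∞) * (m : ℝ≥0∞) := by
    intro l m hl hm
    have h1 := psd_mul_trace_re_nonneg hA hl
    have h2 := psd_mul_trace_re_nonneg hB hm
    simp only [Matrix.mul_sub, Matrix.mul_smul, Matrix.trace_sub, Matrix.trace_smul,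
      Complex.sub_re, Complex.smul_re, sub_nonneg, smul_eq_mul] at h1 h2
    have h3 := hAB σ hσ
    have hmain : ((A*ρ).trace).re ≤ ((l:ℝ)*(m:ℝ)) * ((B*ρ).trace).re := by
      calc ((A*ρ).trace).re ≤ (l:ℝ) * ((A*σ).trace).re := h1
        _ ≤ (l:ℝ) * ((B*σ).trace).re := mul_le_mul_of_nonneg_left h3 l.2
        _ ≤ (l:ℝ) * ((m:ℝ) * ((B*ρ).trace).re) := mul_le_mul_of_nonneg_left h2 l.2
        _ = _ := by ring
    have hr : ((A*ρ).trace).re / ((B*ρ).trace).re ≤ ((l*m : ℝ≥0):ℝ) := by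
      rw [div_le_iff₀ hBρ]; push_cast; linarith
    calc c ≤ ((l*m : ℝ≥0) : ℝ≥0∞) := by
          rw [hc, ← ENNReal.ofReal_coe_nnreal]; exact ENNReal.ofReal_le_ofReal hr
      _ = (l:ℝ≥0∞) * m := by push_cast; rfl
  set x := Rmax ρ σ with hxdef
  set y := Rmax σ ρ with hydef
  have hx1 : (1:ℝ≥0∞) ≤ x := by
    rw [hxdef, Rmax]
    refine le_sInf ?_
    rintro a ⟨l, rfl, hl⟩
    have h0 := (Complex.le_def.mp (psd_trace_nonneg hl)).1
    simp only [Matrix.trace_sub, Matrix.trace_smul, hσtr, hρtr, Complex.sub_re,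
      Complex.smul_re, Complex.one_re, Complex.zero_re, smul_eq_mul, mul_one, sub_nonneg] at h0
    have h0' : (1:ℝ) ≤ (l:ℝ) := by linarith
    exact_mod_cast h0'
  have hy1 : (1:ℝ≥0∞) ≤ y := by
    rw [hydef, Rmax]
    refine le_sInf ?_
    rintro a ⟨m, rfl, hm⟩
    have h0 := (Complex.le_def.mp (psd_trace_nonneg hm)).1
    simp only [Matrix.trace_sub, Matrix.trace_smul, hσtr, hρtr, Complex.sub_re,
      Complex.smul_re, Complex.one_re, Complex.zero_re, smul_eq_mul, mul_one, sub_nonneg] at h0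
    have h0' : (1:ℝ) ≤ (m:ℝ) := by linarith
    exact_mod_cast h0'
  by_contra hcon
  push_neg at hcon
  have hcne : c ≠ ∞ := ENNReal.ofReal_ne_top
  have hy0 : y ≠ 0 := fun h => by simp [h] at hy1
  have hyfin : y ≠ ∞ := by
    intro h
    have : x * y = ∞ := by
      rw [h, ENNReal.mul_top]
      intro hx0; rw [hx0] at hx1; simp at hx1
    rw [this] at hcon; exact (not_top_lt) (hcon.trans_le le_top) |>.elim
  have h1 : x < c / y := (ENNReal.lt_div_iff_mul_lt (Or.inl hy0) (Or.inl hyfin)).2 hcon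
  obtain ⟨a, ha_mem, ha⟩ := sInf_lt_iff.mp h1
  obtain ⟨l, rfl, hl⟩ := ha_mem
  have hlx : x ≤ (l:ℝ≥0∞) := sInf_le ⟨l, rfl, hl⟩
  have hl1 : (1:ℝ≥0∞) ≤ (l:ℝ≥0∞) := hx1.trans hlx
  have hl0 : (l:ℝ≥0∞) ≠ 0 := fun h => by simp [h] at hl1
  have hly : (l:ℝ≥0∞) * y < c := (ENNReal.lt_div_iff_mul_lt (Or.inl hy0) (Or.inl hyfin)).1 ha
  have h2 : y < c / (l:ℝ≥0∞) :=
    (ENNReal.lt_div_iff_mul_lt (Or.inl hl0) (Or.inl ENNReal.coe_ne_top)).2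
      (by rwa [mul_comm] at hly)
  obtain ⟨b, hb_mem, hb⟩ := sInf_lt_iff.mp h2
  obtain ⟨m, rfl, hm⟩ := hb_mem
  have hml : (m:ℝ≥0∞) * (l:ℝ≥0∞) < c :=
    (ENNReal.lt_div_iff_mul_lt (Or.inl hl0) (Or.inl ENNReal.coe_ne_top)).1 hb
  have := key l m hl hm
  rw [mul_comm] at hml
  exact absurd this (not_le_of_gt hml)
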